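/- Let $(A,\mathfrak{m})$ be a Noetherian local ring with infinite residue field and $I$ an ideal with $l(I) > 0$. Then $\operatorname{depth} F(I^n) > 0$ for all $n \gg 0$, i.e., there exists $n_0$ such that $H^0_{F(I^n)_+}(F(I^n)) = 0$ for all $n \geq n_0$. -/

import Mathlib

/-!
STATEMENT 5: (A,m) Noetherian local with infinite residue field, I an ideal with
l(I) > 0.  Then depth F(Iⁿ) > 0 for all n ≫ 0, i.e. there is n₀ such that
H⁰_{F(Iⁿ)₊}(F(Iⁿ)) = 0 for all n ≥ n₀.

Encodings:
* `l(I) > 0`, i.e. dim F(I) ≥ 1, is encoded by: `Iⁿ ≠ m Iⁿ` for all n (the graded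
  pieces of the standard graded ring F(I) are all nonzero).
* The degree-j piece of F(Iⁿ) is I^{nj}/m I^{nj}; the class of a ∈ I^{nj} lies in
  H⁰_{F(Iⁿ)₊}(F(Iⁿ)) iff some power of the irrelevant ideal kills it, i.e.
  ∃ k, ∀ b ∈ I^{nk}, a·b ∈ m·I^{n(j+k)}.  Vanishing of H⁰ says every such a is
  already in m·I^{nj}.
-/

open IsLocalRing

section Aux

open Polynomial

variable {A : Type*} [CommRing A] [IsLocalRing A] (I : Ideal A)

/-- The condition that `a`, viewed in degree `d`, is killed (into `m·F(I)`) by the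
`K`-th power of the irrelevant ideal. -/
def stmt5Cond (d K : ℕ) (a : A) : Prop :=
  Ideal.span {a} * I ^ K ≤ maximalIdeal A * I ^ (d + K)

lemma stmt5Cond_mono {I : Ideal A} {d K t : ℕ} {a : A} (h : stmt5Cond I d K a) :
    stmt5Cond I d (K + t) a := by
  unfold stmt5Cond at h ⊢
  calc Ideal.span {a} * I ^ (K + t) = (Ideal.span {a} * I ^ K) * I ^ t := by
        rw [pow_add, mul_assoc]
    _ ≤ (maximalIdeal A * I ^ (d + K)) * I ^ t := Ideal.mul_mono_left h
    _ = maximalIdeal A * I ^ (d + (K + t)) := by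
        rw [mul_assoc, ← pow_add, add_assoc]

lemma stmt5Cond_mono' {I : Ideal A} {d K K' : ℕ} {a : A} (hK : K ≤ K')
    (h : stmt5Cond I d K a) : stmt5Cond I d K' a := by
  have := stmt5Cond_mono (t := K' - K) h
  rwa [Nat.add_sub_cancel' hK] at this

/-- The degree `d` piece of (the preimage in `I^d` of) `H⁰_{F(I)₊}(F(I))`. -/
def stmt5NI (d : ℕ) : Ideal A where
  carrier := {a | a ∈ I ^ d ∧ ∃ K, stmt5Cond I d K a}
  zero_mem' := by
    refine ⟨zero_mem _, 0, ?_⟩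
    unfold stmt5Cond
    have : Ideal.span ({0} : Set A) = ⊥ := by simp
    rw [this, Ideal.bot_mul]
    exact bot_le
  add_mem' := by
    rintro a b ⟨ha1, K₁, ha2⟩ ⟨hb1, K₂, hb2⟩
    refine ⟨add_mem ha1 hb1, max K₁ K₂, ?_⟩
    have ha3 : stmt5Cond I _ (max K₁ K₂) a := stmt5Cond_mono' (le_max_left _ _) ha2
    have hb3 : stmt5Cond I _ (max K₁ K₂) b := stmt5Cond_mono' (le_max_right _ _) hb2
    unfold stmt5Cond at ha3 hb3 ⊢
    have hspan : Ideal.span ({a + b} : Set A) ≤ Ideal.span {a} ⊔ Ideal.span {b} := by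
      rw [Ideal.span_singleton_le_iff_mem]
      exact Submodule.add_mem_sup (Ideal.mem_span_singleton_self a)
        (Ideal.mem_span_singleton_self b)
    calc Ideal.span {a + b} * I ^ (max K₁ K₂)
        ≤ (Ideal.span {a} ⊔ Ideal.span {b}) * I ^ (max K₁ K₂) := Ideal.mul_mono_left hspan
      _ = Ideal.span {a} * I ^ (max K₁ K₂) ⊔ Ideal.span {b} * I ^ (max K₁ K₂) := by
          rw [Ideal.sup_mul]
      _ ≤ maximalIdeal A * I ^ (_ + max K₁ K₂) := sup_le ha3 hb3
  smul_mem' := by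
    rintro c a ⟨ha1, K, ha2⟩
    refine ⟨Ideal.mul_mem_left _ c ha1, K, ?_⟩
    unfold stmt5Cond at ha2 ⊢
    have : Ideal.span ({c • a} : Set A) = Ideal.span {c} * Ideal.span {a} := by
      rw [smul_eq_mul, Ideal.span_singleton_mul_span_singleton]
    calc Ideal.span {c • a} * I ^ K = Ideal.span {c} * (Ideal.span {a} * I ^ K) := by
          rw [this, mul_assoc]
      _ ≤ Ideal.span {c} * (maximalIdeal A * I ^ (_ + K)) := Ideal.mul_mono_right ha2
      _ ≤ maximalIdeal A * I ^ (_ + K) := Ideal.mul_le_right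

lemma mem_stmt5NI {d : ℕ} {a : A} :
    a ∈ stmt5NI I d ↔ a ∈ I ^ d ∧ ∃ K, stmt5Cond I d K a := Iff.rfl

lemma stmt5NI_mul {I : Ideal A} {e d : ℕ} {c a : A} (hc : c ∈ I ^ e)
    (ha : a ∈ stmt5NI I d) : c * a ∈ stmt5NI I (e + d) := by
  obtain ⟨ha1, K, ha2⟩ := ha
  refine ⟨by rw [pow_add]; exact Ideal.mul_mem_mul hc ha1, K, ?_⟩
  unfold stmt5Cond at ha2 ⊢
  calc Ideal.span {c * a} * I ^ K = Ideal.span {c} * (Ideal.span {a} * I ^ K) := by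
        rw [← Ideal.span_singleton_mul_span_singleton, mul_assoc]
    _ ≤ I ^ e * (maximalIdeal A * I ^ (d + K)) :=
        Ideal.mul_mono ((Ideal.span_singleton_le_iff_mem _).mpr hc) ha2
    _ = maximalIdeal A * I ^ (e + d + K) := by
        rw [mul_left_comm, ← pow_add, ← add_assoc]

/-- The ideal of the Rees algebra whose degree-`d` pieces are the `stmt5NI I d`. -/
def stmt5MM : Ideal (reesAlgebra I) where
  carrier := {f | ∀ d, (f : A[X]).coeff d ∈ stmt5NI I d}
  zero_mem' := by
    intro d
    simp only [ZeroMemClass.coe_zero, coeff_zero]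
    exact zero_mem _
  add_mem' := by
    intro f g hf hg d
    rw [AddMemClass.coe_add, coeff_add]
    exact add_mem (hf d) (hg d)
  smul_mem' := by
    intro r f hf d
    rw [smul_eq_mul]
    rw [show (((r * f : reesAlgebra I) : reesAlgebra I) : A[X]) = (r : A[X]) * (f : A[X])
      from rfl, coeff_mul]
    refine Submodule.sum_mem _ ?_
    rintro ⟨x, y⟩ hxy
    have hd : x + y = d := Finset.HasAntidiagonal.mem_antidiagonal.mp hxy
    exact hd ▸ stmt5NI_mul (r.2 x) (hf y)

lemma stmt5Main [IsNoetherianRing A] :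
    ∃ D : ℕ, ∀ m ≥ D, ∀ a ∈ stmt5NI I m, a ∈ maximalIdeal A * I ^ m := by
  classical
  obtain ⟨s, hs⟩ : (stmt5MM I).FG := IsNoetherian.noetherian (stmt5MM I)
  -- choose killing exponents for the coefficients of the generators
  set kk : reesAlgebra I → ℕ → ℕ := fun f d =>
    if h : ∃ K, stmt5Cond I d K ((f : A[X]).coeff d) then h.choose else 0 with hkk
  set K₀ : ℕ := s.sup fun f => (Finset.range ((f : A[X]).natDegree + 1)).sup (kk f) with hK₀
  set D₀ : ℕ := s.sup fun f => (f : A[X]).natDegree with hD₀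
  refine ⟨D₀ + K₀, ?_⟩
  intro m hm a ha
  have haM : (⟨monomial m a, reesAlgebra.monomial_mem.mpr ha.1⟩ : reesAlgebra I) ∈
      stmt5MM I := by
    intro d
    rw [coeff_monomial]
    split_ifs with hdm
    · exact hdm ▸ ha
    · exact zero_mem _
  rw [← hs] at haM
  obtain ⟨g, -, hg⟩ := Submodule.mem_span_finset.mp haM
  -- take the coefficient in degree m
  have hcoeff : ∑ f ∈ s, ((g f : A[X]) * (f : A[X])).coeff m = a := by
    have := congrArg (fun h : reesAlgebra I => ((h : A[X])).coeff m) hg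
    simpa using this
  rw [← hcoeff]
  refine Submodule.sum_mem _ ?_
  intro f hf
  rw [coeff_mul]
  refine Submodule.sum_mem _ ?_
  rintro ⟨x, y⟩ hxy
  have hd : x + y = m := Finset.HasAntidiagonal.mem_antidiagonal.mp hxy
  set c : A := (g f : A[X]).coeff x with hc
  set w : A := (f : A[X]).coeff y with hw
  by_cases hw0 : w = 0
  · rw [hw0, mul_zero]; exact zero_mem _
  -- f is in stmt5MM, so w ∈ stmt5NI I y
  have hfM : f ∈ stmt5MM I := hs ▸ Ideal.subset_span hf
  have hwNI : w ∈ stmt5NI I y := hfM y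
  have hwex : ∃ K, stmt5Cond I y K w := hwNI.2
  have hkspec : stmt5Cond I y (kk f y) w := by
    rw [hkk]; simp only [← hw]
    rw [dif_pos hwex]
    exact hwex.choose_spec
  have hyle : y ≤ (f : A[X]).natDegree := le_natDegree_of_ne_zero hw0
  have hkle : kk f y ≤ K₀ := by
    refine le_trans ?_ (Finset.le_sup (f := fun g : reesAlgebra I =>
      (Finset.range ((g : A[X]).natDegree + 1)).sup (kk g)) hf)
    exact Finset.le_sup (Finset.mem_range.mpr (Nat.lt_succ_of_le hyle))
  have hcondK : stmt5Cond I y K₀ w := stmt5Cond_mono' hkle hkspec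
  have hyD : y ≤ D₀ := le_trans hyle (Finset.le_sup (f := fun g : reesAlgebra I => (g : A[X]).natDegree) hf)
  have hxK : K₀ ≤ x := by omega
  have hcx : c ∈ I ^ x := (g f).2 x
  have hfinal : Ideal.span ({c * w} : Set A) ≤ maximalIdeal A * I ^ m := by
    calc Ideal.span {c * w} = Ideal.span {c} * Ideal.span {w} := by
          rw [Ideal.span_singleton_mul_span_singleton]
      _ ≤ I ^ x * Ideal.span {w} :=
          Ideal.mul_mono_left ((Ideal.span_singleton_le_iff_mem _).mpr hcx)
      _ = I ^ (x - K₀) * (Ideal.span {w} * I ^ K₀) := by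
          rw [mul_comm (Ideal.span {w}), ← mul_assoc, ← pow_add,
            Nat.sub_add_cancel hxK]
      _ ≤ I ^ (x - K₀) * (maximalIdeal A * I ^ (y + K₀)) := Ideal.mul_mono_right hcondK
      _ = maximalIdeal A * I ^ m := by
          have hexp : x - K₀ + (y + K₀) = m := by omega
          rw [mul_left_comm, ← pow_add, hexp]
  exact hfinal (Ideal.mem_span_singleton_self _)

end Aux

theorem stmt5 {A : Type*} [CommRing A] [IsNoetherianRing A] [IsLocalRing A]
    [Infinite (ResidueField A)] (I : Ideal A)
    -- `l(I) > 0` :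
    (hl : ∀ n : ℕ, I ^ n ≠ maximalIdeal A * I ^ n) :
    ∃ n₀ : ℕ, ∀ n ≥ n₀, ∀ j : ℕ, ∀ a ∈ I ^ (n * j),
      (∃ k : ℕ, ∀ b ∈ I ^ (n * k), a * b ∈ maximalIdeal A * I ^ (n * (j + k))) →
      a ∈ maximalIdeal A * I ^ (n * j) := by
  obtain ⟨D, hD⟩ := stmt5Main I
  refine ⟨D + 1, ?_⟩
  rintro n hn j a ha ⟨k, hk⟩
  rcases Nat.eq_zero_or_pos j with hj | hj
  · -- j = 0 : the degree-zero part of H⁰ vanishes since dim F(I) ≥ 1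
    subst hj
    rw [Nat.mul_zero, pow_zero, mul_one]
    by_contra hma
    have hu : IsUnit a := IsLocalRing.notMem_maximalIdeal.mp hma
    refine hl (n * k) (le_antisymm ?_ Ideal.mul_le_right)
    intro b hb
    have h2 : a * b ∈ maximalIdeal A * I ^ (n * k) := by
      have := hk b hb
      rwa [Nat.zero_add] at this
    obtain ⟨u, rfl⟩ := hu
    have hb' : b = ↑u⁻¹ * (↑u * b) := by
      rw [← mul_assoc, Units.inv_mul, one_mul]
    rw [hb']
    exact Ideal.mul_mem_left _ _ h2
  · -- j ≥ 1 : use the uniform bound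
    have hmD : D ≤ n * j := by
      calc D ≤ n := by omega
        _ = n * 1 := (Nat.mul_one n).symm
        _ ≤ n * j := Nat.mul_le_mul_left n hj
    refine hD (n * j) hmD a ⟨ha, n * k, ?_⟩
    unfold stmt5Cond
    rw [Ideal.mul_le]
    intro r hr b hb
    obtain ⟨c, rfl⟩ := Ideal.mem_span_singleton.mp hr
    have h2 : a * b ∈ maximalIdeal A * I ^ (n * j + n * k) := by
      have := hk b hb
      rwa [Nat.mul_add] at this
    have h3 : a * c * b = c * (a * b) := by ring
    rw [h3]
    exact Ideal.mul_mem_left _ _ h2
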